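/- Let (a_n) be a sequence of nonnegative real numbers. The series Σ_n a_n converges if and only if there exists a sequence (b_n) of positive real numbers such that b_n → ∞ and Σ_n a_n b_n < ∞. -/

import Mathlib

open Filter Topology

/-- **du Bois-Reymond**: no worst convergent series exists.  A series of nonnegative
terms converges iff its terms can be multiplied by a sequence of positive reals tending
to infinity so that the resulting series still converges. -/
theorem du_bois_reymond_no_worst_convergent (a : ℕ → ℝ) (ha : ∀ n, 0 ≤ a n) :
    (∃ l : ℝ, Tendsto (fun N => ∑ i ∈ Finset.range N, a i) atTop (𝓝 l)) ↔
      ∃ b : ℕ → ℝ, (∀ n, 0 < b n) ∧ Tendsto b atTop atTop ∧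
        ∃ l : ℝ, Tendsto (fun N => ∑ i ∈ Finset.range N, a i * b i) atTop (𝓝 l) := by
  constructor
  · rintro ⟨l, hl⟩
    set s : ℕ → ℝ := fun N => ∑ i ∈ Finset.range N, a i with hs
    have hmono : Monotone s := by
      intro m n hmn
      exact Finset.sum_le_sum_of_subset_of_nonneg (Finset.range_subset_range.2 hmn)
        (fun i _ _ => ha i)
    set r : ℕ → ℝ := fun n => l - s n with hr
    have hrle : ∀ n, s n ≤ l := fun n => hmono.ge_of_tendsto hl n
    have hrnn : ∀ n, 0 ≤ r n := fun n => sub_nonneg.2 (hrle n)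
    have hra : ∀ n, r n - r (n + 1) = a n := by
      intro n
      simp only [hr, hs, Finset.sum_range_succ]
      ring
    have hranti : ∀ n, r (n + 1) ≤ r n := by
      intro n
      nlinarith [ha n, hra n]
    have hr0 : Tendsto r atTop (𝓝 0) := by
      have := hl.const_sub l
      simpa using this
    set b : ℕ → ℝ := fun n =>
      if r n = 0 then (n + 1 : ℝ) else 1 / (Real.sqrt (r n) + Real.sqrt (r (n + 1)))
      with hb
    have hbpos : ∀ n, 0 < b n := by
      intro n
      by_cases h : r n = 0
      · simp [hb, h]; positivity
      · have h1 : 0 < r n := lt_of_le_of_ne (hrnn n) (Ne.symm h)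
        have h2 : 0 < Real.sqrt (r n) := Real.sqrt_pos.2 h1
        have h3 : 0 ≤ Real.sqrt (r (n + 1)) := Real.sqrt_nonneg _
        simp only [hb, if_neg h]
        positivity
    have key : ∀ n, a n * b n = Real.sqrt (r n) - Real.sqrt (r (n + 1)) := by
      intro n
      by_cases h : r n = 0
      · have h1 : r (n + 1) = 0 := le_antisymm (h ▸ hranti n) (hrnn _)
        have h2 : a n = 0 := by rw [← hra n, h, h1]; ring
        simp [h, h1, h2]
      · have h1 : 0 < r n := lt_of_le_of_ne (hrnn n) (Ne.symm h)
        have h2 : 0 < Real.sqrt (r n) := Real.sqrt_pos.2 h1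
        have h3 : 0 ≤ Real.sqrt (r (n + 1)) := Real.sqrt_nonneg _
        have hD : 0 < Real.sqrt (r n) + Real.sqrt (r (n + 1)) := by linarith
        simp only [hb, if_neg h]
        rw [mul_one_div, div_eq_iff hD.ne', ← hra n]
        have e1 : Real.sqrt (r n) ^ 2 = r n := Real.sq_sqrt (hrnn n)
        have e2 : Real.sqrt (r (n + 1)) ^ 2 = r (n + 1) := Real.sq_sqrt (hrnn _)
        nlinarith [e1, e2]
    have hsum : ∀ N, ∑ i ∈ Finset.range N, a i * b i
        = Real.sqrt (r 0) - Real.sqrt (r N) := by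
      intro N
      calc ∑ i ∈ Finset.range N, a i * b i
          = ∑ i ∈ Finset.range N, (Real.sqrt (r i) - Real.sqrt (r (i + 1))) := by
            exact Finset.sum_congr rfl fun i _ => key i
        _ = Real.sqrt (r 0) - Real.sqrt (r N) := by
            rw [Finset.sum_range_sub' (fun i => Real.sqrt (r i))]
    refine ⟨b, hbpos, ?_, Real.sqrt (r 0), ?_⟩
    · rw [tendsto_atTop]
      intro C
      have hD0 : Tendsto (fun n => Real.sqrt (r n) + Real.sqrt (r (n + 1)))
          atTop (𝓝 0) := by
        have h1 : Tendsto (fun n => Real.sqrt (r n)) atTop (𝓝 0) := by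
          have := (Real.continuous_sqrt.tendsto 0).comp hr0
          simpa [Function.comp_def] using this
        have h2 : Tendsto (fun n => Real.sqrt (r (n + 1))) atTop (𝓝 0) :=
          h1.comp (tendsto_add_atTop_nat 1)
        simpa using h1.add h2
      have hC : (0 : ℝ) < max C 1 := lt_of_lt_of_le one_pos (le_max_right _ _)
      have hev1 : ∀ᶠ n in atTop,
          Real.sqrt (r n) + Real.sqrt (r (n + 1)) < 1 / max C 1 := by
        have := hD0.eventually (eventually_lt_nhds (by positivity : (0:ℝ) < 1 / max C 1))
        simpa using this
      have hev2 : ∀ᶠ n : ℕ in atTop, C ≤ (n + 1 : ℝ) := by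
        filter_upwards [eventually_ge_atTop ⌈C⌉₊] with n hn
        calc C ≤ (⌈C⌉₊ : ℝ) := Nat.le_ceil C
          _ ≤ (n : ℝ) := by exact_mod_cast hn
          _ ≤ n + 1 := by linarith
      filter_upwards [hev1, hev2] with n h1 h2
      by_cases h : r n = 0
      · simpa [hb, h] using h2
      · have hrp : 0 < r n := lt_of_le_of_ne (hrnn n) (Ne.symm h)
        have hD : 0 < Real.sqrt (r n) + Real.sqrt (r (n + 1)) := by
          have := Real.sqrt_pos.2 hrp
          have := Real.sqrt_nonneg (r (n + 1))
          linarith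
        simp only [hb, if_neg h]
        calc C ≤ max C 1 := le_max_left _ _
          _ ≤ 1 / (Real.sqrt (r n) + Real.sqrt (r (n + 1))) := by
              rw [le_div_iff₀ hD]
              have := h1.le
              calc max C 1 * (Real.sqrt (r n) + Real.sqrt (r (n + 1)))
                  ≤ max C 1 * (1 / max C 1) := by
                    exact mul_le_mul_of_nonneg_left this hC.le
                _ = 1 := by field_simp
    · have h1 : Tendsto (fun N => Real.sqrt (r N)) atTop (𝓝 0) := by
        have := (Real.continuous_sqrt.tendsto 0).comp hr0
        simpa [Function.comp_def] using this
      have : Tendsto (fun N => Real.sqrt (r 0) - Real.sqrt (r N)) atTop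
          (𝓝 (Real.sqrt (r 0) - 0)) := tendsto_const_nhds.sub h1
      simp only [sub_zero] at this
      simpa only [hsum] using this
  · rintro ⟨b, hbpos, hbtop, l, hl⟩
    have habnn : ∀ n, 0 ≤ a n * b n := fun n => mul_nonneg (ha n) (hbpos n).le
    have hmono' : Monotone (fun N => ∑ i ∈ Finset.range N, a i * b i) := by
      intro m n hmn
      exact Finset.sum_le_sum_of_subset_of_nonneg (Finset.range_subset_range.2 hmn)
        (fun i _ _ => habnn i)
    have hle : ∀ N, ∑ i ∈ Finset.range N, a i * b i ≤ l :=
      fun N => hmono'.ge_of_tendsto hl N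
    obtain ⟨N₀, hN₀⟩ := (tendsto_atTop.1 hbtop 1).exists_forall_of_atTop
    have hmono : Monotone (fun N => ∑ i ∈ Finset.range N, a i) := by
      intro m n hmn
      exact Finset.sum_le_sum_of_subset_of_nonneg (Finset.range_subset_range.2 hmn)
        (fun i _ _ => ha i)
    have hbdd : BddAbove (Set.range fun N => ∑ i ∈ Finset.range N, a i) := by
      refine ⟨(∑ i ∈ Finset.range N₀, a i) + l, ?_⟩
      rintro x ⟨N, rfl⟩
      rcases le_total N N₀ with h | h
      · have h0l : 0 ≤ l := le_trans (by simp) (hle 0)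
        have := hmono h
        simpa using le_trans this (by linarith)
      · have hsplit : ∑ i ∈ Finset.range N, a i
            = (∑ i ∈ Finset.range N₀, a i) + ∑ i ∈ Finset.Ico N₀ N, a i := by
          rw [← Finset.sum_range_add_sum_Ico _ h]
        simp only []
        rw [hsplit]
        have h1 : ∑ i ∈ Finset.Ico N₀ N, a i ≤ ∑ i ∈ Finset.Ico N₀ N, a i * b i := by
          refine Finset.sum_le_sum fun i hi => ?_
          have hbi : 1 ≤ b i := hN₀ i (Finset.mem_Ico.1 hi).1
          nlinarith [ha i]
        have h2 : ∑ i ∈ Finset.Ico N₀ N, a i * b i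
            ≤ ∑ i ∈ Finset.range N, a i * b i := by
          refine Finset.sum_le_sum_of_subset_of_nonneg ?_ (fun i _ _ => habnn i)
          intro i hi
          exact Finset.mem_range.2 (Finset.mem_Ico.1 hi).2
        linarith [hle N]
    exact ⟨_, tendsto_atTop_ciSup hmono hbdd⟩
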